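/- For any finite family of (r-1)(d+1)+1 points in R^d (with repetitions allowed), there is a partition of the family into r parts such that the intersection of the convex hulls of the r parts is nonempty. -/

import Mathlib

open Finset Metric

local notation "⟪" x ", " y "⟫" => @inner ℝ _ _ x y

theorem colorful_caratheodory' (n r : ℕ) (hr : 0 < r)
    (f : Fin (n + 1) → Fin r → EuclideanSpace ℝ (Fin n))
    (hf : ∀ i, (0 : EuclideanSpace ℝ (Fin n)) ∈ convexHull ℝ (Set.range (f i))) :
    ∃ c : Fin (n + 1) → Fin r,
      (0 : EuclideanSpace ℝ (Fin n)) ∈ convexHull ℝ (Set.range fun i => f i (c i)) := by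
  classical
  haveI : Nonempty (Fin r) := ⟨⟨0, hr⟩⟩
  let K : (Fin (n + 1) → Fin r) → Set (EuclideanSpace ℝ (Fin n)) :=
    fun c => convexHull ℝ (Set.range fun i => f i (c i))
  have hKcompact : ∀ c, IsCompact (K c) := fun c => (Set.finite_range _).isCompact_convexHull ℝ
  have hKne : ∀ c, (K c).Nonempty := fun c => ⟨f 0 (c 0), subset_convexHull ℝ _ ⟨0, rfl⟩⟩
  have hKconv : ∀ c, Convex ℝ (K c) := fun c => convex_convexHull ℝ _
  let m : (Fin (n + 1) → Fin r) → ℝ := fun c => infDist 0 (K c)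
  obtain ⟨c, -, hcmin⟩ := Finset.exists_min_image Finset.univ m
    ⟨Classical.arbitrary _, Finset.mem_univ _⟩
  obtain ⟨x, hxK, hxdist⟩ := (hKcompact c).exists_infDist_eq_dist (hKne c) 0
  rw [dist_zero_left] at hxdist
  have hx0 : x = 0 := by
    by_contra hx0
    have hxpos : (0:ℝ) < ‖x‖ := norm_pos_iff.mpr hx0
    -- the swap argument
    have swap : ∀ i0 : Fin (n + 1),
        x ∉ convexHull ℝ ((fun i => f i (c i)) '' {i | i ≠ i0}) := by
      intro i0 hx
      obtain ⟨j, hj⟩ : ∃ j, ⟪x, f i0 j⟫ ≤ 0 := by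
        by_contra h
        push_neg at h
        have hconv : Convex ℝ {y : EuclideanSpace ℝ (Fin n) | (0:ℝ) < ⟪x, y⟫} :=
          convex_halfSpace_gt ⟨fun a b => inner_add_right x a b,
            fun t y => real_inner_smul_right x y t⟩ 0
        have hsub : Set.range (f i0) ⊆ {y : EuclideanSpace ℝ (Fin n) | (0:ℝ) < ⟪x, y⟫} := by
          rintro _ ⟨j, rfl⟩; exact h j
        have h0 : (0 : EuclideanSpace ℝ (Fin n)) ∈ {y : EuclideanSpace ℝ (Fin n) | (0:ℝ) < ⟪x, y⟫} :=
          convexHull_min hsub hconv (hf i0)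
        simp [inner_zero_right] at h0
      set p := f i0 j with hp
      have hpx : p ≠ x := by
        intro hpeq
        rw [hpeq, real_inner_self_eq_norm_sq] at hj
        nlinarith
      have hpxpos : (0:ℝ) < ‖p - x‖ := by
        simpa using norm_pos_iff.mpr (sub_ne_zero.mpr hpx)
      set c' := Function.update c i0 j with hc'
      have hxK' : x ∈ K c' := by
        refine convexHull_mono ?_ hx
        rintro _ ⟨i, hi, rfl⟩
        exact ⟨i, by simp [hc', Function.update_of_ne hi]⟩
      have hpK' : p ∈ K c' :=
        subset_convexHull ℝ _ ⟨i0, by simp [hc', hp, Function.update_self]⟩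
      set t := min 1 (‖x‖ ^ 2 / ‖p - x‖ ^ 2) with ht
      have ht0 : 0 < t := lt_min one_pos (div_pos (by positivity) (by positivity))
      have ht1 : t ≤ 1 := min_le_left _ _
      have htle : t * ‖p - x‖ ^ 2 ≤ ‖x‖ ^ 2 := by
        have := min_le_right 1 (‖x‖ ^ 2 / ‖p - x‖ ^ 2)
        rw [← ht] at this
        calc t * ‖p - x‖ ^ 2 ≤ (‖x‖ ^ 2 / ‖p - x‖ ^ 2) * ‖p - x‖ ^ 2 := by
              apply mul_le_mul_of_nonneg_right this (by positivity)
          _ = ‖x‖ ^ 2 := by field_simp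
      set y := x + t • (p - x) with hy
      have hyK' : y ∈ K c' :=
        (hKconv c').add_smul_sub_mem hxK' hpK' ⟨ht0.le, ht1⟩
      have hinner : ⟪x, p - x⟫ ≤ -‖x‖ ^ 2 := by
        rw [inner_sub_right, real_inner_self_eq_norm_sq]
        linarith
      have hy2 : ‖y‖ ^ 2 < ‖x‖ ^ 2 := by
        have hexp : ‖y‖ ^ 2 = ‖x‖ ^ 2 + 2 * (t * ⟪x, p - x⟫) + t ^ 2 * ‖p - x‖ ^ 2 := by
          rw [hy, norm_add_sq_real, real_inner_smul_right, norm_smul]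
          rw [mul_pow, Real.norm_eq_abs, sq_abs]
        have h2 : t ^ 2 * ‖p - x‖ ^ 2 ≤ t * ‖x‖ ^ 2 := by
          have : t ^ 2 * ‖p - x‖ ^ 2 = t * (t * ‖p - x‖ ^ 2) := by ring
          rw [this]
          exact mul_le_mul_of_nonneg_left htle ht0.le
        have h3 : t * ⟪x, p - x⟫ ≤ -(t * ‖x‖ ^ 2) := by
          have := mul_le_mul_of_nonneg_left hinner ht0.le
          rwa [mul_neg] at this
        have h4 : 0 < t * ‖x‖ ^ 2 := mul_pos ht0 (by positivity)
        linarith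
      have hylt : ‖y‖ < ‖x‖ := by nlinarith [norm_nonneg y, norm_nonneg x]
      have : m c ≤ m c' := hcmin c' (Finset.mem_univ _)
      have h2 : m c' ≤ ‖y‖ := by
        have := infDist_le_dist_of_mem (x := (0 : EuclideanSpace ℝ (Fin n))) hyK'
        rwa [dist_zero_left] at this
      rw [← hxdist] at hylt
      simp only [m] at this h2
      linarith
    -- Carathéodory decomposition of x
    obtain ⟨ι, hι, z, w, hz_range, hz_ind, hw_pos, hw_sum, hw_eq⟩ :=
      eq_pos_convex_span_of_mem_convexHull hxK
    letI := hι
    have hg' : ∀ i : ι, ∃ a, f a (c a) = z i := fun i => hz_range (Set.mem_range_self i)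
    choose g hg using hg'
    have hg_inj : Function.Injective g := fun i i' h => by
      apply hz_ind.injective
      rw [← hg, ← hg, h]
    by_cases hgsurj : Function.Surjective g
    · -- basis case
      have hcard : Fintype.card ι = n + 1 := by
        rw [Fintype.card_of_bijective ⟨hg_inj, hgsurj⟩, Fintype.card_fin]
      have htop : affineSpan ℝ (Set.range z) = ⊤ :=
        hz_ind.affineSpan_eq_top_iff_card_eq_finrank_add_one.mpr
          (by rw [hcard, finrank_euclideanSpace_fin])
      let b : AffineBasis ι ℝ (EuclideanSpace ℝ (Fin n)) := ⟨z, hz_ind, htop⟩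
      have hxint : x ∈ interior (convexHull ℝ (Set.range z)) := by
        have : Set.range z = Set.range b := rfl
        rw [this, b.interior_convexHull]
        intro i
        have hcomb : Finset.univ.affineCombination ℝ z w = x := by
          rw [Finset.univ.affineCombination_eq_linear_combination z w hw_sum]
          exact hw_eq
        have : b.coord i x = w i := by
          rw [← hcomb]
          exact b.coord_apply_combination_of_mem (Finset.mem_univ i) hw_sum
        rw [this]
        exact hw_pos i
      obtain ⟨ε, hε, hball⟩ := Metric.isOpen_iff.mp isOpen_interior x hxint
      set δ := min 1 (ε / (2 * ‖x‖)) with hδ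
      have hδ0 : 0 < δ := lt_min one_pos (by positivity)
      have hδ1 : δ ≤ 1 := min_le_left _ _
      set y := (1 - δ) • x with hy
      have hyx : dist y x < ε := by
        rw [dist_eq_norm, hy]
        have : (1 - δ) • x - x = -(δ • x) := by
          rw [sub_smul, one_smul]; abel
        rw [this, norm_neg, norm_smul, Real.norm_eq_abs, abs_of_pos hδ0]
        have : δ * ‖x‖ ≤ (ε / (2 * ‖x‖)) * ‖x‖ :=
          mul_le_mul_of_nonneg_right (min_le_right _ _) (norm_nonneg x)
        have h2 : (ε / (2 * ‖x‖)) * ‖x‖ = ε / 2 := by field_simp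
        linarith
      have hyK : y ∈ K c := by
        have h1 : y ∈ interior (convexHull ℝ (Set.range z)) := hball hyx
        have h2 : convexHull ℝ (Set.range z) ⊆ K c := convexHull_mono hz_range
        exact h2 (interior_subset h1)
      have hynorm : ‖y‖ < ‖x‖ := by
        rw [hy, norm_smul, Real.norm_eq_abs, abs_of_nonneg (by linarith)]
        nlinarith
      have : m c ≤ ‖y‖ := by
        have := infDist_le_dist_of_mem (x := (0 : EuclideanSpace ℝ (Fin n))) hyK
        rwa [dist_zero_left] at this
      rw [← hxdist] at hynorm
      simp only [m] at this
      linarith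
    · -- missing color case: swap
      obtain ⟨i0, hi0⟩ := not_forall.mp fun h => hgsurj fun a => h a
      push_neg at hi0
      apply swap i0
      have hx' : Finset.univ.centerMass w z ∈
          convexHull ℝ ((fun i => f i (c i)) '' {i | i ≠ i0}) := by
        refine Finset.centerMass_mem_convexHull _ (fun i _ => (hw_pos i).le)
          (by rw [hw_sum]; exact one_pos) (fun i _ => ?_)
        exact ⟨g i, hi0 i, hg i⟩
      have : Finset.univ.centerMass w z = x := by
        rw [Finset.centerMass, hw_sum, inv_one, one_smul, hw_eq]
      rwa [this] at hx'
  exact ⟨c, hx0 ▸ hxK⟩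

/-- Tverberg's theorem: any family of (r-1)(d+1)+1 points in ℝ^d (with repetitions
allowed) admits a partition of the index set into r parts whose convex hulls have a
common point. -/
theorem tverberg (d r : ℕ) (hd : 1 ≤ d) (hr : 2 ≤ r)
    (f : Fin ((r - 1) * (d + 1) + 1) → (Fin d → ℝ)) :
    ∃ c : Fin ((r - 1) * (d + 1) + 1) → Fin r,
      (⋂ j : Fin r, convexHull ℝ (f '' {i | c i = j})).Nonempty := by
  classical
  have hrR : (0:ℝ) < r := by exact_mod_cast (by omega : 0 < r)
  have hrne : (r:ℝ) ≠ 0 := ne_of_gt hrR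
  set a : Fin ((r - 1) * (d + 1) + 1) → Fin (d + 1) → ℝ := fun i => Fin.snoc (f i) 1 with ha
  set lst : Fin r := ⟨r - 1, by omega⟩ with hlst
  set emb : Fin (r - 1) → Fin r := fun k => ⟨k, by omega⟩ with hemb
  set v : Fin r → Fin (r - 1) → ℝ :=
    fun j k => (if j = emb k then 1 else 0) - (if j = lst then 1 else 0) with hv
  have hvsum : ∀ k, ∑ j, v j k = 0 := by
    intro k
    simp [hv, Finset.sum_sub_distrib, Finset.sum_ite_eq' Finset.univ]
  set e : Fin (r - 1) × Fin (d + 1) ≃ Fin ((r - 1) * (d + 1)) := finProdFinEquiv with he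
  set F : Fin ((r - 1) * (d + 1) + 1) → Fin r → EuclideanSpace ℝ (Fin ((r - 1) * (d + 1))) :=
    fun i j => WithLp.toLp 2 (fun m => v j (e.symm m).1 * a i (e.symm m).2) with hFdef
  have hFsum : ∀ i, ∑ j, F i j = 0 := by
    intro i
    ext m
    rw [WithLp.ofLp_sum, Finset.sum_apply]
    show ∑ j, v j (e.symm m).1 * a i (e.symm m).2 = (0:ℝ)
    rw [← Finset.sum_mul, hvsum, zero_mul]
  have hf0 : ∀ i, (0 : EuclideanSpace ℝ (Fin ((r - 1) * (d + 1)))) ∈ convexHull ℝ (Set.range (F i)) := by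
    intro i
    have hcm : Finset.univ.centerMass (fun _ : Fin r => (1:ℝ)) (F i) = 0 := by
      simp [Finset.centerMass, hFsum i]
    rw [← hcm]
    refine Finset.centerMass_mem_convexHull _ (fun _ _ => zero_le_one) ?_
      (fun j _ => Set.mem_range_self j)
    simp only [Finset.sum_const, Finset.card_univ, Fintype.card_fin, nsmul_eq_mul, mul_one]
    exact hrR
  obtain ⟨c, hc⟩ := colorful_caratheodory' ((r - 1) * (d + 1)) r (by omega) F hf0
  rw [convexHull_range_eq_exists_affineCombination] at hc
  obtain ⟨s, w, hw0, hwsum, hwcomb⟩ := hc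
  set lam : Fin ((r - 1) * (d + 1) + 1) → ℝ := fun i => if i ∈ s then w i else 0 with hlam
  have hlam0 : ∀ i, 0 ≤ lam i := fun i => by
    by_cases h : i ∈ s <;> simp [hlam, h]
    exact hw0 i h
  have hlamsum : ∑ i, lam i = 1 := by
    simp only [hlam]
    rw [Finset.sum_ite_mem, Finset.univ_inter, hwsum]
  have hlamcomb : ∑ i, lam i • (F i (c i)) = 0 := by
    rw [← hwcomb, Finset.affineCombination_eq_linear_combination _ _ _ hwsum]
    simp only [hlam, ite_smul, zero_smul]
    rw [Finset.sum_ite_mem, Finset.univ_inter]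
  have hcoord : ∀ (k : Fin (r - 1)) (l : Fin (d + 1)),
      ∑ i, lam i * (v (c i) k * a i l) = 0 := by
    intro k l
    have h : (∑ i, lam i • F i (c i)) (e (k, l)) = (0 : EuclideanSpace ℝ _) (e (k, l)) := by
      rw [hlamcomb]
    rw [WithLp.ofLp_sum, Finset.sum_apply] at h
    simpa [hFdef, Equiv.symm_apply_apply, smul_eq_mul] using h
  set W : Fin r → Fin (d + 1) → ℝ :=
    fun j l => ∑ i ∈ Finset.univ.filter (fun i => c i = j), lam i * a i l with hW
  have hWkey : ∀ (k : Fin (r - 1)) (l : Fin (d + 1)), W (emb k) l = W lst l := by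
    intro k l
    have h1 : ∑ j, ∑ i ∈ Finset.univ.filter (fun i => c i = j),
        lam i * (v (c i) k * a i l) = 0 := by
      rw [Finset.sum_fiberwise]; exact hcoord k l
    have h2 : ∀ j : Fin r, ∑ i ∈ Finset.univ.filter (fun i => c i = j),
        lam i * (v (c i) k * a i l) = v j k * W j l := by
      intro j
      rw [hW, Finset.mul_sum]
      refine Finset.sum_congr rfl fun i hi => ?_
      rw [(Finset.mem_filter.mp hi).2]; ring
    rw [Finset.sum_congr rfl (fun j _ => h2 j)] at h1
    have h3 : ∑ j, v j k * W j l = W (emb k) l - W lst l := by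
      simp only [hv, sub_mul, ite_mul, one_mul, zero_mul, Finset.sum_sub_distrib,
        Finset.sum_ite_eq' Finset.univ, Finset.mem_univ, if_true]
    rw [h3] at h1
    linarith
  have hWall : ∀ (j : Fin r) (l : Fin (d + 1)), W j l = W lst l := by
    intro j l
    by_cases hj : j = lst
    · rw [hj]
    · have hjne : (j : ℕ) ≠ r - 1 := fun h => hj (Fin.ext h)
      have hjlt : (j : ℕ) < r - 1 := by have := j.isLt; omega
      have : j = emb ⟨(j : ℕ), hjlt⟩ := Fin.ext rfl
      rw [this]
      exact hWkey ⟨(j : ℕ), hjlt⟩ l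
  have hWsumj : ∀ l, ∑ j, W j l = ∑ i, lam i * a i l := fun l =>
    Finset.sum_fiberwise _ _ _
  have halast : ∀ i, a i (Fin.last d) = 1 := fun i => by rw [ha]; simp
  have hS : ∀ j : Fin r, W j (Fin.last d) = (r : ℝ)⁻¹ := by
    have h1 : ∑ j : Fin r, W j (Fin.last d) = 1 := by
      rw [hWsumj]
      simp only [halast, mul_one]
      exact hlamsum
    have h2 : ∑ j : Fin r, W j (Fin.last d) = r * W lst (Fin.last d) := by
      rw [Finset.sum_congr rfl (fun j _ => hWall j _)]
      simp [Finset.sum_const, Finset.card_univ, nsmul_eq_mul]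
    intro j
    rw [hWall j]
    rw [h2] at h1
    field_simp
    linarith
  have hSsum : ∀ j : Fin r, ∑ i ∈ Finset.univ.filter (fun i => c i = j), lam i
      = (r : ℝ)⁻¹ := by
    intro j
    have : ∑ i ∈ Finset.univ.filter (fun i => c i = j), lam i = W j (Fin.last d) := by
      rw [hW]
      refine Finset.sum_congr rfl fun i _ => ?_
      rw [halast, mul_one]
    rw [this, hS j]
  set q : Fin d → ℝ := fun t => (r : ℝ) * W lst (Fin.castSucc t) with hq
  refine ⟨c, q, Set.mem_iInter.mpr fun j => ?_⟩
  have hcm : (Finset.univ.filter (fun i => c i = j)).centerMass lam f = q := by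
    rw [Finset.centerMass, hSsum j]
    funext t
    rw [Pi.smul_apply, Finset.sum_apply, smul_eq_mul, inv_inv]
    have : ∑ i ∈ Finset.univ.filter (fun i => c i = j), (lam i • f i) t
        = W j (Fin.castSucc t) := by
      rw [hW]
      refine Finset.sum_congr rfl fun i _ => ?_
      rw [Pi.smul_apply, smul_eq_mul, ha]
      simp [Fin.snoc_castSucc]
    rw [this, hWall j, hq]
  rw [← hcm]
  refine Finset.centerMass_mem_convexHull _ (fun i _ => hlam0 i) ?_ ?_
  · rw [hSsum j]; positivity
  · intro i hi
    have h2 : c i = j := (Finset.mem_filter.mp hi).2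
    exact ⟨i, h2, rfl⟩
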